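/- Let X be a Hausdorff topological space with a continuous action of the circle group S¹ = {λ ∈ ℂ : |λ| = 1}, and let k ∈ ℕ, k ≥ 1. Let ε₁ > 0, let B = {z ∈ ℂ^{n-1} : |z| < ε₁}, and let F : B → X be a continuous injective map with x₀ := F(0). Assume: (i) the stabilizer of x₀ in S¹ is exactly the group of k-th roots of unity; (ii) there exists δ ∈ (0, π/k) such that e^{iθ}·F(z₁) ≠ F(z₂) for all real θ with 0 < |θ| < δ and all z₁, z₂ ∈ B. Then for every sufficiently small ϵ > 0 there exists ε₀ ∈ (0, ε₁) such that the map (z, θ) ↦ e^{iθ}·F(z) is injective on {z ∈ ℂ^{n-1} : |z| < ε₀} × (−π/k + ϵ, π/k − ϵ). -/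

import Mathlib

set_option maxHeartbeats 1000000

private lemma circle_exp_pow (θ : ℝ) (k : ℕ) : Circle.exp θ ^ k = Circle.exp (k * θ) := by
  induction k with
  | zero => simp
  | succ m ih => rw [pow_succ, ih, ← Circle.exp_add]; push_cast; ring_nf

/-- Uniform separation near a point that is moved by every element of a compact set of angles. -/
private lemma circle_sep_aux {X : Type*} [TopologicalSpace X] [T2Space X]
    [MulAction Circle X] [ContinuousSMul Circle X]
    (x₀ : X) (K : Set ℝ) (hK : IsCompact K) (h : ∀ θ ∈ K, Circle.exp θ • x₀ ≠ x₀) :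
    ∃ U : Set X, IsOpen U ∧ x₀ ∈ U ∧
      ∀ θ ∈ K, ∀ u ∈ U, ∀ v ∈ U, Circle.exp θ • u ≠ v := by
  have hcont : Continuous fun p : ℝ × X => Circle.exp p.1 • p.2 :=
    (Circle.exp.continuous.comp continuous_fst).smul continuous_snd
  have key : ∀ θ₀ ∈ K, ∃ I : Set ℝ, I ∈ nhds θ₀ ∧ ∃ U : Set X, IsOpen U ∧ x₀ ∈ U ∧
      ∀ θ ∈ I, ∀ u ∈ U, ∀ v ∈ U, Circle.exp θ • u ≠ v := by
    intro θ₀ hθ₀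
    obtain ⟨V, W, hV, hW, hxV, hxW, hVW⟩ := t2_separation (h θ₀ hθ₀)
    have hopen : IsOpen ((fun p : ℝ × X => Circle.exp p.1 • p.2) ⁻¹' V) := hV.preimage hcont
    have hmem : (θ₀, x₀) ∈ (fun p : ℝ × X => Circle.exp p.1 • p.2) ⁻¹' V := hxV
    rw [isOpen_prod_iff] at hopen
    obtain ⟨I, U₀, hI, hU₀, hθI, hxU₀, hsub⟩ := hopen θ₀ x₀ hmem
    have hP : ∀ θ ∈ I, ∀ u ∈ U₀ ∩ W, ∀ v ∈ U₀ ∩ W, Circle.exp θ • u ≠ v := by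
      intro θ hθ u hu v hv hEq
      have hmem2 : (θ, u) ∈ I ×ˢ U₀ := Set.mem_prod.mpr ⟨hθ, hu.1⟩
      have h1 := hsub hmem2
      rw [Set.mem_preimage] at h1
      have h2 : Circle.exp θ • u ∈ W := hEq ▸ hv.2
      exact Set.disjoint_left.mp hVW h1 h2
    exact ⟨I, hI.mem_nhds hθI, U₀ ∩ W, hU₀.inter hW, ⟨hxU₀, hxW⟩, hP⟩
  choose! I hInhds U hUopen hUx hP using key
  obtain ⟨t, htK, hcover⟩ := hK.elim_nhds_subcover I fun θ₀ hθ₀ => hInhds θ₀ hθ₀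
  refine ⟨⋂ θ₀ ∈ t, U θ₀, isOpen_biInter_finset fun θ₀ hθ₀ => hUopen θ₀ (htK θ₀ hθ₀), ?_, ?_⟩
  · exact Set.mem_biInter fun θ₀ hθ₀ => hUx θ₀ (htK θ₀ hθ₀)
  · intro θ hθ u hu v hv
    obtain ⟨θ₀, hθ₀t, hθI⟩ := Set.mem_iUnion₂.mp (hcover hθ)
    exact hP θ₀ (htK θ₀ hθ₀t) θ hθI u (Set.mem_iInter₂.mp hu θ₀ hθ₀t)
      v (Set.mem_iInter₂.mp hv θ₀ hθ₀t)

/-- Extension of canonical coordinates around a point of the stratum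
`X_k` (stabilizer exactly the `k`-th roots of unity) of a continuous circle action on a
Hausdorff space to angular width almost `2π/k`. -/
theorem circle_action_canonical_coordinates_stratum
    {X : Type*} [TopologicalSpace X] [T2Space X]
    [MulAction Circle X] [ContinuousSMul Circle X]
    (k : ℕ) (hk : 1 ≤ k)
    (n : ℕ) (ε₁ : ℝ) (hε₁ : 0 < ε₁)
    (F : EuclideanSpace ℂ (Fin (n - 1)) → X)
    (hFc : ContinuousOn F (Metric.ball 0 ε₁))
    (hFi : Set.InjOn F (Metric.ball 0 ε₁))
    (hstab : {g : Circle | g • F 0 = F 0} = {g : Circle | g ^ k = 1})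
    (δ : ℝ) (hδ0 : 0 < δ) (hδπ : δ < Real.pi / k)
    (hsep : ∀ θ : ℝ, 0 < |θ| → |θ| < δ →
      ∀ z₁ ∈ Metric.ball (0 : EuclideanSpace ℂ (Fin (n - 1))) ε₁,
        ∀ z₂ ∈ Metric.ball (0 : EuclideanSpace ℂ (Fin (n - 1))) ε₁,
          Circle.exp θ • F z₁ ≠ F z₂) :
    ∀ ϵ : ℝ, 0 < ϵ → ϵ < Real.pi / k →
      ∃ ε₀ : ℝ, 0 < ε₀ ∧ ε₀ < ε₁ ∧
        Set.InjOn (fun p : EuclideanSpace ℂ (Fin (n - 1)) × ℝ => Circle.exp p.2 • F p.1)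
          (Metric.ball 0 ε₀ ×ˢ Set.Ioo (-(Real.pi / k) + ϵ) (Real.pi / k - ϵ)) := by
  intro ϵ hϵ0 hϵπ
  have hk0 : (0 : ℝ) < k := by exact_mod_cast Nat.lt_of_lt_of_le Nat.zero_lt_one hk
  set M : ℝ := 2 * (Real.pi / k - ϵ) with hM
  -- the compact "bad" set of angles
  set K : Set ℝ := Set.Icc (-M) M ∩ {θ | δ ≤ |θ|} with hKdef
  have hKcompact : IsCompact K :=
    isCompact_Icc.inter_right (isClosed_le continuous_const continuous_abs)
  have hmove : ∀ θ ∈ K, Circle.exp θ • F 0 ≠ F 0 := by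
    intro θ hθ hEq
    have hθmem : Circle.exp θ ∈ {g : Circle | g ^ k = 1} := hstab ▸ hEq
    have h1 : Circle.exp θ ^ k = 1 := hθmem
    rw [circle_exp_pow] at h1
    have h2 : Circle.exp ((k : ℝ) * θ) = Circle.exp 0 := by rw [Circle.exp_zero]; exact h1
    obtain ⟨m, hm⟩ := Circle.exp_eq_exp.mp h2
    rw [zero_add] at hm
    have hθabs : |θ| ≤ M := abs_le.mpr ⟨hθ.1.1, hθ.1.2⟩
    have hθne : θ ≠ 0 := by
      intro h0
      have hδθ : δ ≤ |θ| := hθ.2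
      rw [h0, abs_zero] at hδθ
      exact absurd hδθ (not_le.mpr hδ0)
    have hMlt : M < 2 * Real.pi / k := by
      rw [hM]
      have : Real.pi / k - ϵ < Real.pi / k := by linarith
      calc 2 * (Real.pi / k - ϵ) < 2 * (Real.pi / k) := by linarith
        _ = 2 * Real.pi / k := by ring
    have hkθ : |(k : ℝ) * θ| < 2 * Real.pi := by
      rw [abs_mul, abs_of_pos hk0]
      calc (k : ℝ) * |θ| ≤ (k : ℝ) * M := by
            exact mul_le_mul_of_nonneg_left hθabs (le_of_lt hk0)
        _ < (k : ℝ) * (2 * Real.pi / k) := by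
            exact mul_lt_mul_of_pos_left hMlt hk0
        _ = 2 * Real.pi := by field_simp
    have hmabs : |(m : ℝ)| * (2 * Real.pi) < 2 * Real.pi := by
      have := hkθ
      rw [hm, abs_mul, abs_of_pos Real.two_pi_pos] at this
      exact this
    have hm0 : m = 0 := by
      by_contra hm0
      have : (1 : ℝ) ≤ |(m : ℝ)| := by
        rw [← Int.cast_abs]
        exact_mod_cast Int.one_le_abs (by exact_mod_cast hm0)
      nlinarith [Real.two_pi_pos]
    rw [hm0] at hm
    simp at hm
    rcases hm with hm | hm
    · exact absurd hm (by positivity)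
    · exact hθne hm
  obtain ⟨U, hUopen, hUx, hUsep⟩ := circle_sep_aux (F 0) K hKcompact hmove
  -- choose ε₀ using continuity of F at 0
  have h0mem : (0 : EuclideanSpace ℂ (Fin (n - 1))) ∈ Metric.ball 0 ε₁ := by
    simp [hε₁]
  have hcwa : ContinuousWithinAt F (Metric.ball 0 ε₁) 0 := hFc 0 h0mem
  have hball_nhds : Metric.ball (0 : EuclideanSpace ℂ (Fin (n - 1))) ε₁ ∈ nhds 0 :=
    Metric.isOpen_ball.mem_nhds h0mem
  have hcat : ContinuousAt F 0 := hcwa.continuousAt hball_nhds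
  have hpre : F ⁻¹' U ∈ nhds (0 : EuclideanSpace ℂ (Fin (n - 1))) :=
    hcat.preimage_mem_nhds (hUopen.mem_nhds hUx)
  obtain ⟨r, hr0, hrsub⟩ := Metric.mem_nhds_iff.mp (Filter.inter_mem hpre hball_nhds)
  refine ⟨min r ε₁ / 2, by positivity, ?_, ?_⟩
  · have h1 : min r ε₁ ≤ ε₁ := min_le_right r ε₁
    linarith
  · intro p hp q hq hEq
    obtain ⟨hp1, hp2⟩ := hp
    obtain ⟨hq1, hq2⟩ := hq
    have hsmall : ∀ z : EuclideanSpace ℂ (Fin (n - 1)), z ∈ Metric.ball 0 (min r ε₁ / 2) →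
        z ∈ Metric.ball 0 ε₁ ∧ F z ∈ U := by
      intro z hz
      have hzr : z ∈ Metric.ball (0 : EuclideanSpace ℂ (Fin (n - 1))) r := by
        refine Metric.mem_ball.mpr ?_
        have := Metric.mem_ball.mp hz
        have h1 : min r ε₁ / 2 ≤ r := le_trans (by linarith [min_le_left r ε₁]) le_rfl
        linarith
      have := hrsub hzr
      exact ⟨this.2, this.1⟩
    obtain ⟨hp1', hpU⟩ := hsmall p.1 hp1
    obtain ⟨hq1', hqU⟩ := hsmall q.1 hq1
    set θ : ℝ := p.2 - q.2 with hθdef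
    have hkey : Circle.exp θ • F p.1 = F q.1 := by
      have h1 : Circle.exp θ • F p.1 = Circle.exp (-q.2) • Circle.exp p.2 • F p.1 := by
        rw [smul_smul, ← Circle.exp_add]
        congr 1
        exact congrArg Circle.exp (by rw [hθdef]; ring)
      rw [h1]
      have hEq' : Circle.exp p.2 • F p.1 = Circle.exp q.2 • F q.1 := hEq
      rw [hEq', smul_smul, ← Circle.exp_add, neg_add_cancel, Circle.exp_zero, one_smul]
    have hθbound : |θ| < M := by
      rw [hθdef, hM]
      have h1 := hp2.1; have h2 := hp2.2; have h3 := hq2.1; have h4 := hq2.2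
      rw [abs_sub_lt_iff]
      constructor <;> linarith
    by_cases hθ0 : θ = 0
    · have hFeq : F p.1 = F q.1 := by
        rw [hθ0, Circle.exp_zero, one_smul] at hkey
        exact hkey
      have hz : p.1 = q.1 := hFi hp1' hq1' hFeq
      have hθeq : p.2 = q.2 := by
        have : p.2 - q.2 = 0 := hθ0
        linarith
      exact Prod.ext hz hθeq
    · exfalso
      have hθabs : 0 < |θ| := abs_pos.mpr hθ0
      by_cases hδcase : |θ| < δ
      · exact hsep θ hθabs hδcase p.1 hp1' q.1 hq1' hkey
      · have hθK : θ ∈ K := by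
          refine ⟨abs_le.mp (le_of_lt hθbound), not_lt.mp hδcase⟩
        exact hUsep θ hθK (F p.1) hpU (F q.1) hqU hkey
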